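/- Let Λ ⊆ ℤ² be a rank-2 sublattice and v = (v₁,v₂) ∈ Λ ∩ ℕ², v ≠ 0. Then there is a lattice path from 0 to v whose only pair of distinct nodes congruent modulo Λ is (0, v) if and only if v is visible in Λ and v₁ + v₂ ≤ vol(Λ). -/

import Mathlib

lemma discrete_ivt (f : ℕ → ℤ) :
    ∀ (n a : ℕ), (∀ i, a ≤ i → i < a + n → (f (i + 1) - f i).natAbs ≤ 1) →
      f a ≤ 0 → 0 ≤ f (a + n) → ∃ c, a ≤ c ∧ c ≤ a + n ∧ f c = 0 := by
  intro n
  induction n with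
  | zero =>
    intro a _ h1 h2
    simp only [Nat.add_zero] at h2
    exact ⟨a, le_refl a, by omega, le_antisymm h1 h2⟩
  | succ n ih =>
    intro a hstep ha hb
    by_cases h : f (a + 1) ≤ 0
    · obtain ⟨c, hc1, hc2, hc3⟩ := ih (a + 1) (fun i h1 h2 => hstep i (by omega) (by omega)) h
        (by rw [show a + 1 + n = a + (n+1) by omega]; exact hb)
      exact ⟨c, by omega, by omega, hc3⟩
    · have hs := hstep a (le_refl a) (by omega)
      have : f a = 0 := by omega
      exact ⟨a, le_refl a, by omega, this⟩

lemma det_dvd (Λ : AddSubgroup (ℤ × ℤ)) (hΛ : Λ.index ≠ 0) (w v : ℤ × ℤ)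
    (hw : w ∈ Λ) (hv : v ∈ Λ) : (Λ.index : ℤ) ∣ w.1 * v.2 - w.2 * v.1 := by
  have hG : Nat.card ((ℤ × ℤ) ⧸ Λ) ≠ 0 := hΛ
  haveI : Finite ((ℤ × ℤ) ⧸ Λ) := (Nat.card_ne_zero.mp hG).2
  set φ : (ℤ × ℤ) →+ (ℤ × ℤ) ⧸ Λ := QuotientAddGroup.mk' Λ with hφ
  set a : (ℤ × ℤ) ⧸ Λ := φ (1, 0) with ha
  set b : (ℤ × ℤ) ⧸ Λ := φ (0, 1) with hb
  have hmk : ∀ x y : ℤ, φ (x, y) = x • a + y • b := by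
    intro x y
    have h1 : (x, y) = x • ((1:ℤ),(0:ℤ)) + y • ((0:ℤ),(1:ℤ)) := by
      simp [Prod.ext_iff]
    rw [h1, map_add, map_zsmul, map_zsmul]
  have hwab : w.1 • a + w.2 • b = 0 := by
    rw [← hmk]
    exact (QuotientAddGroup.eq_zero_iff (w.1, w.2)).mpr hw
  have hvab : v.1 • a + v.2 • b = 0 := by
    rw [← hmk]
    exact (QuotientAddGroup.eq_zero_iff (v.1, v.2)).mpr hv
  set H := AddSubgroup.zmultiples a with hH
  set ψ : ((ℤ × ℤ) ⧸ Λ) →+ ((ℤ × ℤ) ⧸ Λ) ⧸ H := QuotientAddGroup.mk' H with hψ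
  set bq := ψ b with hbq
  have hψa : ψ a = 0 := (QuotientAddGroup.eq_zero_iff a).mpr (AddSubgroup.mem_zmultiples a)
  -- bq generates the quotient
  have gen : ∀ q : ((ℤ × ℤ) ⧸ Λ) ⧸ H, ∃ y : ℤ, y • bq = q := by
    intro q
    obtain ⟨g, rfl⟩ := QuotientAddGroup.mk'_surjective H q
    obtain ⟨⟨x, y⟩, rfl⟩ := QuotientAddGroup.mk'_surjective Λ g
    refine ⟨y, ?_⟩
    rw [← hψ, ← hφ, hmk, map_add, map_zsmul, map_zsmul, hψa, smul_zero]
    exact (zero_add (y • bq)).symm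
  have htop : AddSubgroup.zmultiples bq = ⊤ := by
    ext q; simp [AddSubgroup.mem_zmultiples_iff, gen q]
  set α := addOrderOf a with hα
  set β := addOrderOf bq with hβ
  have cardQ : Nat.card (((ℤ × ℤ) ⧸ Λ) ⧸ H) = β := by
    rw [hβ, ← Nat.card_zmultiples bq, htop]
    exact (Nat.card_congr (Equiv.Set.univ _).symm).symm ▸ rfl
  have hn : Λ.index = α * β := by
    have h1 := AddSubgroup.card_mul_index H
    rw [Nat.card_zmultiples a] at h1
    have h2 : H.index = β := by rw [← cardQ]; rfl
    rw [h2] at h1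
    exact h1.symm
  obtain ⟨c, hc⟩ : ∃ c : ℤ, c • a = (β : ℤ) • b := by
    have h0 : ψ ((β : ℤ) • b) = 0 := by
      rw [map_zsmul]
      exact addOrderOf_dvd_iff_zsmul_eq_zero.mp (Int.natCast_dvd_natCast.mpr dvd_rfl)
    exact AddSubgroup.mem_zmultiples_iff.mp ((QuotientAddGroup.eq_zero_iff _).mp h0)
  have hrel : ∀ u : ℤ × ℤ, u.1 • a + u.2 • b = 0 →
      ∃ u2 : ℤ, u.2 = β * u2 ∧ (α : ℤ) ∣ u.1 + u2 * c := by
    intro u hu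
    have hdvd : ((β : ℕ) : ℤ) ∣ u.2 := by
      rw [hβ, addOrderOf_dvd_iff_zsmul_eq_zero]
      have h1 : u.2 • bq = ψ (u.1 • a + u.2 • b) := by
        rw [map_add, map_zsmul, map_zsmul, hψa, smul_zero]
        exact (zero_add (u.2 • ψ b)).symm
      rw [hu, map_zero] at h1
      exact h1
    obtain ⟨u2, hu2⟩ := hdvd
    refine ⟨u2, hu2, ?_⟩
    rw [hα, addOrderOf_dvd_iff_zsmul_eq_zero]
    have h2 : (u.1 + u2 * c) • a = u.1 • a + u.2 • b := by
      rw [add_zsmul, mul_zsmul, hc, ← mul_zsmul, mul_comm u2 ((β : ℤ)), ← hu2]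
    exact h2.trans hu
  obtain ⟨w2', hw2', hwα⟩ := hrel w hwab
  obtain ⟨v2', hv2', hvα⟩ := hrel v hvab
  have hX : (α : ℤ) ∣ (w.1 + w2' * c) * v2' - w2' * (v.1 + v2' * c) :=
    dvd_sub (hwα.mul_right v2') (hvα.mul_left w2')
  have hD : w.1 * v.2 - w.2 * v.1
      = (β : ℤ) * ((w.1 + w2' * c) * v2' - w2' * (v.1 + v2' * c)) := by
    rw [hv2', hw2']; push_cast; ring
  rw [hn, hD]
  push_cast
  rw [mul_comm ((α:ℤ)) ((β:ℤ))]
  exact mul_dvd_mul_left _ hX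

/-- A nonzero point `v` of a rank-2 sublattice `Λ ⊆ ℤ²` is visible in `Λ` if no proper
fraction `(1/d) • v` with `d ≥ 2` lies in `Λ`. -/
def IsVisibleIn (Λ : AddSubgroup (ℤ × ℤ)) (v : ℤ × ℤ) : Prop :=
  ∀ d : ℕ, 2 ≤ d → ∀ w ∈ Λ, (d : ℤ) • w ≠ v

/-- For a nonzero `v ∈ Λ ∩ ℕ²`, there is a lattice path from `0` to `v` whose only pair
of distinct nodes congruent modulo `Λ` is the pair of endpoints, if and only if `v` is
visible in `Λ` and `v₁ + v₂ ≤ vol(Λ)`. -/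
theorem exists_latticePath_iff_visible_and_norm_le (Λ : AddSubgroup (ℤ × ℤ))
    (hΛ : Λ.index ≠ 0) (v : ℤ × ℤ) (hvΛ : v ∈ Λ) (hv1 : 0 ≤ v.1) (hv2 : 0 ≤ v.2)
    (hv0 : v ≠ 0) :
    (∃ (p : ℕ → ℤ × ℤ) (k : ℕ), p 0 = 0 ∧ p k = v ∧
        (∀ i < k, p (i + 1) - p i = ((1 : ℤ), (0 : ℤ)) ∨
          p (i + 1) - p i = ((0 : ℤ), (1 : ℤ))) ∧
        (∀ i ≤ k, ∀ j ≤ k, i ≠ j → p j - p i ∈ Λ →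
          (i = 0 ∧ j = k) ∨ (i = k ∧ j = 0))) ↔
      IsVisibleIn Λ v ∧ v.1 + v.2 ≤ (Λ.index : ℤ) := by
  haveI hfin : Finite ((ℤ × ℤ) ⧸ Λ) := (Nat.card_ne_zero.mp hΛ).2
  constructor
  · rintro ⟨p, k, hp0, hpk, hstep, huniq⟩
    -- decompose the steps
    have hstep' : ∀ i < k, ((p (i+1)).1 - (p i).1 = 1 ∧ (p (i+1)).2 - (p i).2 = 0) ∨
        ((p (i+1)).1 - (p i).1 = 0 ∧ (p (i+1)).2 - (p i).2 = 1) := by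
      intro i hi
      rcases hstep i hi with h | h
      · exact Or.inl ⟨by rw [← Prod.fst_sub, h], by rw [← Prod.snd_sub, h]⟩
      · exact Or.inr ⟨by rw [← Prod.fst_sub, h], by rw [← Prod.snd_sub, h]⟩
    -- coordinate sums
    have hsum : ∀ i ≤ k, (p i).1 + (p i).2 = (i : ℤ) := by
      intro i
      induction i with
      | zero => intro _; rw [hp0]; simp
      | succ i ih =>
        intro hik
        have h1 := ih (by omega)
        rcases hstep' i (by omega) with h | h <;> (push_cast; omega)
    have hk : (k : ℤ) = v.1 + v.2 := by
      have := hsum k le_rfl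
      rw [hpk] at this
      omega
    constructor
    · -- visibility
      intro d hd w hwΛ heq
      have hw1 : (d : ℤ) * w.1 = v.1 := by
        have := congrArg Prod.fst heq; simpa [smul_eq_mul] using this
      have hw2 : (d : ℤ) * w.2 = v.2 := by
        have := congrArg Prod.snd heq; simpa [smul_eq_mul] using this
      have hw1n : 0 ≤ w.1 := by nlinarith
      have hw2n : 0 ≤ w.2 := by nlinarith
      have hwne : w ≠ 0 := by
        rintro rfl
        rw [smul_zero] at heq
        exact hv0 heq.symm
      have hmpos : 0 < w.1 + w.2 := by
        rcases lt_or_ge 0 (w.1 + w.2) with h | h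
        · exact h
        · exfalso; apply hwne; have : w.1 = 0 ∧ w.2 = 0 := by omega
          exact Prod.ext this.1 this.2
      set m := (w.1 + w.2).toNat with hmdef
      have hm : (m : ℤ) = w.1 + w.2 := Int.toNat_of_nonneg (by omega)
      have hm1 : 1 ≤ m := by omega
      have hdm : d * m = k := by
        have : (d : ℤ) * m = (k : ℤ) := by rw [hm, hk]; push_cast; nlinarith
        exact_mod_cast this
      have hmk : m < k := by
        have h2 : 2 * m ≤ d * m := Nat.mul_le_mul_right m hd
        omega
      set f : ℕ → ℤ := fun j => (p (j + m)).1 - (p j).1 - w.1 with hfdef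
      have hsum0 : ∑ t ∈ Finset.range d, f (t * m) = 0 := by
        have h1 : ∀ t ∈ Finset.range d, f (t * m) =
            ((fun t => (p (t * m)).1) (t+1) - (fun t => (p (t * m)).1) t) - w.1 := by
          intro t _
          simp only [hfdef, Nat.succ_mul]
        rw [Finset.sum_congr rfl h1, Finset.sum_sub_distrib, Finset.sum_range_sub
          (fun t => (p (t * m)).1) d, Finset.sum_const, Finset.card_range]
        rw [hdm, Nat.zero_mul, hp0, hpk, nsmul_eq_mul]
        simp only [Prod.fst_zero]
        linarith
      -- there are nonpositive and nonnegative terms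
      have hex1 : ∃ t, t < d ∧ f (t * m) ≤ 0 := by
        by_contra h
        push_neg at h
        have hpos : 0 < ∑ t ∈ Finset.range d, f (t * m) :=
          Finset.sum_pos (fun t ht => h t (Finset.mem_range.mp ht))
            ⟨0, Finset.mem_range.mpr (by omega)⟩
        omega
      have hex2 : ∃ t, t < d ∧ 0 ≤ f (t * m) := by
        by_contra h
        push_neg at h
        have hneg : ∑ t ∈ Finset.range d, f (t * m) < 0 :=
          Finset.sum_neg (fun t ht => h t (Finset.mem_range.mp ht))
            ⟨0, Finset.mem_range.mpr (by omega)⟩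
        omega
      obtain ⟨t1, ht1d, ht1⟩ := hex1
      obtain ⟨t2, ht2d, ht2⟩ := hex2
      -- step bound for f
      have hbound : ∀ i, i + m < k → (f (i + 1) - f i).natAbs ≤ 1 := by
        intro i him
        have h1 := hstep' (i + m) (by omega)
        have h2 := hstep' i (by omega)
        simp only [hfdef]
        have hrw : i + 1 + m = i + m + 1 := by omega
        rw [hrw]
        omega
      -- find a zero of f
      have hzero : ∃ c, c + m ≤ k ∧ f c = 0 := by
        rcases le_total t1 t2 with hle | hle
        · have hmle : t1 * m ≤ t2 * m := Nat.mul_le_mul_right m hle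
          obtain ⟨c, hc1, hc2, hc3⟩ := discrete_ivt f (t2 * m - t1 * m) (t1 * m)
            (fun i hi1 hi2 => hbound i (by
              have : (t2 + 1) * m ≤ d * m := Nat.mul_le_mul_right m (by omega)
              have : i < t2 * m := by omega
              calc i + m < t2 * m + m := by omega
                _ = (t2 + 1) * m := (Nat.succ_mul t2 m).symm
                _ ≤ d * m := Nat.mul_le_mul_right m (by omega)
                _ = k := hdm)) ht1
            (by rw [show t1 * m + (t2 * m - t1 * m) = t2 * m by omega]; exact ht2)
          refine ⟨c, ?_, hc3⟩
          have hc4 : c ≤ t2 * m := by omega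
          calc c + m ≤ t2 * m + m := by omega
            _ = (t2 + 1) * m := (Nat.succ_mul t2 m).symm
            _ ≤ d * m := Nat.mul_le_mul_right m (by omega)
            _ = k := hdm
        · have hmle : t2 * m ≤ t1 * m := Nat.mul_le_mul_right m hle
          obtain ⟨c, hc1, hc2, hc3⟩ := discrete_ivt (fun j => -f j) (t1 * m - t2 * m) (t2 * m)
            (fun i hi1 hi2 => by
              have hb := hbound i (by
                calc i + m < t1 * m + m := by omega
                  _ = (t1 + 1) * m := (Nat.succ_mul t1 m).symm
                  _ ≤ d * m := Nat.mul_le_mul_right m (by omega)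
                  _ = k := hdm)
              omega)
            (by simpa using ht2)
            (by rw [show t2 * m + (t1 * m - t2 * m) = t1 * m by omega]; simpa using ht1)
          refine ⟨c, ?_, by simpa using hc3⟩
          calc c + m ≤ t1 * m + m := by omega
            _ = (t1 + 1) * m := (Nat.succ_mul t1 m).symm
            _ ≤ d * m := Nat.mul_le_mul_right m (by omega)
            _ = k := hdm
      obtain ⟨c, hck, hfc⟩ := hzero
      have hpc : p (c + m) - p c = w := by
        have h1 : (p (c + m)).1 - (p c).1 = w.1 := by
          simp only [hfdef] at hfc; omega
        have hs1 := hsum (c + m) hck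
        have hs2 := hsum c (by omega)
        have h2 : (p (c + m)).2 - (p c).2 = w.2 := by push_cast at hs1 hs2 ⊢; omega
        rw [Prod.ext_iff, Prod.fst_sub, Prod.snd_sub]
        exact ⟨h1, h2⟩
      have hmem : p (c + m) - p c ∈ Λ := hpc ▸ hwΛ
      rcases huniq c (by omega) (c + m) (by omega) (by omega) hmem with ⟨h1, h2⟩ | ⟨h1, h2⟩
      · omega
      · omega
    · -- the norm bound
      have hinj : Function.Injective
          (fun i : Fin k => (QuotientAddGroup.mk (p i) : (ℤ × ℤ) ⧸ Λ)) := by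
        intro i j hij
        by_contra hne
        have hne' : (i : ℕ) ≠ (j : ℕ) := fun h => hne (Fin.ext h)
        have hmem : p j - p i ∈ Λ := by
          have h1 : -(p i) + p j ∈ Λ := QuotientAddGroup.eq.mp hij
          rwa [neg_add_eq_sub] at h1
        rcases huniq i i.2.le j j.2.le hne' hmem with ⟨_, h2⟩ | ⟨h2, _⟩
        · exact absurd h2 (by omega)
        · exact absurd h2 (by omega)
      have hcard : k ≤ Λ.index := by
        have := Nat.card_le_card_of_injective _ hinj
        simpa [AddSubgroup.index] using this
      rw [← hk]
      exact_mod_cast hcard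
  · rintro ⟨hVis, hnorm⟩
    have hne00 : ¬(v.1 = 0 ∧ v.2 = 0) := fun h => hv0 (Prod.ext h.1 h.2)
    set a := v.1.toNat with hadef
    have ha : (a : ℤ) = v.1 := Int.toNat_of_nonneg hv1
    set k := (v.1 + v.2).toNat with hkdef
    have hk : (k : ℤ) = v.1 + v.2 := Int.toNat_of_nonneg (by omega)
    have hk0 : 0 < k := by omega
    have hak : a ≤ k := by omega
    set p : ℕ → ℤ × ℤ := fun s => (((s * a / k : ℕ) : ℤ), (s : ℤ) - ((s * a / k : ℕ) : ℤ))
      with hpdef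
    have key : ∀ i j : ℕ, i < j → j ≤ k → p j - p i ∈ Λ → i = 0 ∧ j = k := by
      intro i j hij hjk hmem
      set w := p j - p i with hwdef
      have hw1 : w.1 = ((j * a / k : ℕ) : ℤ) - ((i * a / k : ℕ) : ℤ) := by
        simp [hwdef, hpdef]
      have hw2 : w.2 = ((j : ℤ) - (i : ℤ)) - w.1 := by
        simp only [hwdef, hpdef, Prod.snd_sub, Prod.fst_sub]
        ring
      have hv2k : v.2 = (k : ℤ) - v.1 := by omega
      have hdvd := det_dvd Λ hΛ w v hmem hvΛ
      have hD : w.1 * v.2 - w.2 * v.1 = (k : ℤ) * w.1 - ((j : ℤ) - (i : ℤ)) * v.1 := by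
        rw [hv2k, hw2]; ring
      have h1 := Nat.div_add_mod (i * a) k
      have h2 := Nat.div_add_mod (j * a) k
      have hlt1 : i * a % k < k := Nat.mod_lt _ hk0
      have hlt2 : j * a % k < k := Nat.mod_lt _ hk0
      have hDval : (k : ℤ) * w.1 - ((j : ℤ) - (i : ℤ)) * v.1
          = ((i * a % k : ℕ) : ℤ) - ((j * a % k : ℕ) : ℤ) := by
        have h1' : (k : ℤ) * ((i * a / k : ℕ) : ℤ) + ((i * a % k : ℕ) : ℤ)
            = (i : ℤ) * (a : ℤ) := by exact_mod_cast h1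
        have h2' : (k : ℤ) * ((j * a / k : ℕ) : ℤ) + ((j * a % k : ℕ) : ℤ)
            = (j : ℤ) * (a : ℤ) := by exact_mod_cast h2
        rw [hw1, ← ha]
        linear_combination h2' - h1'
      have hkn : (k : ℤ) ≤ (Λ.index : ℤ) := by omega
      have hDz : (k : ℤ) * w.1 - ((j : ℤ) - (i : ℤ)) * v.1 = 0 := by
        apply Int.eq_zero_of_abs_lt_dvd (hD ▸ hdvd)
        rw [hDval, abs_lt]
        have c1 : ((i * a % k : ℕ) : ℤ) < (k : ℤ) := by exact_mod_cast hlt1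
        have c2 : ((j * a % k : ℕ) : ℤ) < (k : ℤ) := by exact_mod_cast hlt2
        have c3 : (0 : ℤ) ≤ ((i * a % k : ℕ) : ℤ) := Int.natCast_nonneg _
        have c4 : (0 : ℤ) ≤ ((j * a % k : ℕ) : ℤ) := Int.natCast_nonneg _
        omega
      have hkw1 : (k : ℤ) * w.1 = ((j : ℤ) - (i : ℤ)) * v.1 := by linarith
      have hkw2 : (k : ℤ) * w.2 = ((j : ℤ) - (i : ℤ)) * v.2 := by
        rw [hw2, hv2k]; linear_combination -hkw1
      by_cases hΔeq : j - i = k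
      · omega
      · exfalso
        set Δ : ℕ := j - i with hΔdef
        have hΔ0 : 0 < Δ := by omega
        have hΔk : Δ < k := by omega
        have hΔcast : ((Δ : ℕ) : ℤ) = (j : ℤ) - (i : ℤ) := by push_cast; omega
        set g := Nat.gcd Δ k with hgdef
        have hgΔ : g ∣ Δ := Nat.gcd_dvd_left Δ k
        have hgk : g ∣ k := Nat.gcd_dvd_right Δ k
        have hg0 : 0 < g := Nat.gcd_pos_of_pos_left k hΔ0
        have hgle : g ≤ Δ := Nat.le_of_dvd hΔ0 hgΔ
        set dd := k / g with hdddef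
        have hdg : dd * g = k := Nat.div_mul_cancel hgk
        have hdd2 : 2 ≤ dd := by
          rcases Nat.lt_or_ge dd 2 with h | h
          · interval_cases dd <;> omega
          · exact h
        have hbez := Int.gcd_eq_gcd_ab (Δ : ℤ) (k : ℤ)
        set s := Int.gcdA (Δ : ℤ) (k : ℤ) with hsdef
        set t := Int.gcdB (Δ : ℤ) (k : ℤ) with htdef
        have hbez' : (g : ℤ) = (Δ : ℤ) * s + (k : ℤ) * t := by
          rw [hgdef]
          rw [← Int.gcd_natCast_natCast Δ k]
          exact hbez
        rw [hΔcast] at hbez'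
        rw [← hΔcast] at hkw1 hkw2
        set u : ℤ × ℤ := s • w + t • v with hudef
        have huΛ : u ∈ Λ := Λ.add_mem (AddSubgroup.zsmul_mem Λ hmem s)
          (AddSubgroup.zsmul_mem Λ hvΛ t)
        have hu1 : u.1 = s * w.1 + t * v.1 := by simp [hudef, smul_eq_mul]
        have hu2 : u.2 = s * w.2 + t * v.2 := by simp [hudef, smul_eq_mul]
        have hku1 : (k : ℤ) * u.1 = (g : ℤ) * v.1 := by
          rw [hu1]
          linear_combination s * hkw1 - v.1 * hbez' + s * v.1 * hΔcast
        have hku2 : (k : ℤ) * u.2 = (g : ℤ) * v.2 := by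
          rw [hu2]
          linear_combination s * hkw2 - v.2 * hbez' + s * v.2 * hΔcast
        have hdgz : (dd : ℤ) * (g : ℤ) = (k : ℤ) := by exact_mod_cast congrArg Nat.cast hdg
        have hkz : (k : ℤ) ≠ 0 := by omega
        have hdu1 : (dd : ℤ) * u.1 = v.1 := by
          apply mul_left_cancel₀ hkz
          linear_combination (dd : ℤ) * hku1 + v.1 * hdgz
        have hdu2 : (dd : ℤ) * u.2 = v.2 := by
          apply mul_left_cancel₀ hkz
          linear_combination (dd : ℤ) * hku2 + v.2 * hdgz
        exact hVis dd hdd2 u huΛ (by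
          rw [Prod.ext_iff]
          constructor
          · simpa [smul_eq_mul] using hdu1
          · simpa [smul_eq_mul] using hdu2)
    refine ⟨p, k, ?_, ?_, ?_, ?_⟩
    · simp [hpdef]
    · have hka : k * a / k = a := Nat.mul_div_cancel_left a hk0
      simp only [hpdef, hka]
      rw [Prod.ext_iff]
      exact ⟨ha, by simp; omega⟩
    · intro i hi
      have hx1 : i * a / k ≤ (i + 1) * a / k :=
        Nat.div_le_div_right (Nat.mul_le_mul_right a (by omega))
      have hx2 : (i + 1) * a / k ≤ i * a / k + 1 := by
        calc (i + 1) * a / k ≤ (i * a + k) / k :=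
              Nat.div_le_div_right (by rw [Nat.succ_mul]; omega)
          _ = i * a / k + 1 := Nat.add_div_right _ hk0
      have hcase : (i + 1) * a / k = i * a / k ∨ (i + 1) * a / k = i * a / k + 1 := by omega
      rcases hcase with h | h
      · right
        simp only [hpdef, Prod.mk_sub_mk, Prod.mk.injEq, h]
        constructor <;> push_cast <;> ring
      · left
        simp only [hpdef, Prod.mk_sub_mk, Prod.mk.injEq, h]
        constructor <;> push_cast <;> ring
    · intro i hi j hj hij hmem
      rcases Nat.lt_or_ge i j with h | h
      · exact Or.inl (key i j h hj hmem)
      · have h' : j < i := by omega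
        have hmem' : p i - p j ∈ Λ := by
          have hneg := Λ.neg_mem hmem
          rwa [neg_sub] at hneg
        obtain ⟨ha1, ha2⟩ := key j i h' hi hmem'
        exact Or.inr ⟨ha2, ha1⟩
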